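/- Let A be a locally noetherian Grothendieck category and C a Serre subcategory. Suppose L ∈ A satisfies: for every C-isomorphism u': A' → B' with A', B' finitely generated, Hom(u',L) is an isomorphism. Then for every C-isomorphism u: A → B that is an epimorphism, the induced map Hom(B,L) → Hom(A,L) is an isomorphism. -/

import Mathlib

open CategoryTheory CategoryTheory.Limits
open scoped ZeroObject

universe v u

/-- Finitely generated object: `Hom(X, -)` preserves filtered colimits of monomorphisms,
expressed via the factorization property. -/
def IsFGObj {A : Type u} [Category.{v} A] (X : A) : Prop :=
  ∀ (J : Type v) [SmallCategory J] [IsFiltered J] (D : J ⥤ A),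
    (∀ ⦃j j' : J⦄ (f : j ⟶ j'), Mono (D.map f)) →
    ∀ (c : Cocone D), IsColimit c →
    ∀ (g : X ⟶ c.pt), ∃ (j : J) (g' : X ⟶ D.obj j), g' ≫ c.ι.app j = g

/-- A morphism `u` is a `C`-isomorphism if both its kernel and cokernel satisfy `C`. -/
def IsCIso {A : Type u} [Category.{v} A] [Abelian A] (C : A → Prop)
    {X Y : A} (u : X ⟶ Y) : Prop :=
  C (kernel u) ∧ C (cokernel u)

section Aux

variable {A : Type u} [Category.{v} A]

/-- The constant cocone on the constant functor. -/
@[simps]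
def myConstCocone (J : Type v) [SmallCategory J] (X : A) :
    Cocone ((Functor.const J).obj X) where
  pt := X
  ι := { app := fun _ => 𝟙 X, naturality := by intros; simp }

/-- Over a filtered (hence connected) category, the constant cocone is a colimit. -/
noncomputable def myConstIsColimit (J : Type v) [SmallCategory J] [IsFiltered J] (X : A) :
    IsColimit (myConstCocone J X) where
  desc s := s.ι.app (Classical.choice IsFiltered.nonempty)
  fac s j := by
    haveI := IsFiltered.isConnected (C := J)
    have h : ∀ (j₁ j₂ : J) (f : j₁ ⟶ j₂), s.ι.app j₁ = s.ι.app j₂ := by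
      intro j₁ j₂ f
      simpa using (s.ι.naturality f).symm
    have h2 := constant_of_preserves_morphisms (α := (X ⟶ s.pt)) (fun k => s.ι.app k) h
      (Classical.choice IsFiltered.nonempty) j
    exact (Category.id_comp _).trans h2
  uniq s m hm := by
    have h2 := hm (Classical.choice IsFiltered.nonempty)
    exact (Category.id_comp m).symm.trans h2

variable [HasColimits A]

/-- The colimit of a constant functor over a filtered category. -/
noncomputable def constColimIso (J : Type v) [SmallCategory J] [IsFiltered J] (X : A) :
    colimit ((Functor.const J).obj X) ≅ X :=
  colimit.isoColimitCocone ⟨myConstCocone J X, myConstIsColimit J X⟩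

theorem constColimIso_inv (J : Type v) [SmallCategory J] [IsFiltered J] (X : A) (k : J) :
    (constColimIso (A := A) J X).inv = colimit.ι ((Functor.const J).obj X) k := by
  have h : colimit.ι ((Functor.const J).obj X) k ≫ (constColimIso (A := A) J X).hom = 𝟙 X := by
    exact
      colimit.isoColimitCocone_ι_hom ⟨myConstCocone J X, myConstIsColimit J X⟩ k
  calc (constColimIso (A := A) J X).inv
      = (colimit.ι ((Functor.const J).obj X) k ≫ (constColimIso (A := A) J X).hom) ≫
        (constColimIso (A := A) J X).inv := by rw [h]; simp
    _ = colimit.ι ((Functor.const J).obj X) k := by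
        rw [Category.assoc, Iso.hom_inv_id, Category.comp_id]

variable [Abelian A] [HasFilteredColimits A] [AB5 A]

/-- In an AB5 abelian category, the injections of a filtered colimit of monos are monos. -/
theorem mono_cocone_ι {J : Type v} [SmallCategory J] [IsFiltered J] (D : J ⥤ A)
    (hmono : ∀ ⦃j j' : J⦄ (f : j ⟶ j'), Mono (D.map f))
    (c : Cocone D) (hc : IsColimit c) (j : J) : Mono (c.ι.app j) := by
  have e1 : colimit.desc D c = (colimit.isoColimitCocone ⟨c, hc⟩).hom := by
    apply colimit.hom_ext; intro k; simp
  haveI hdesc : IsIso (colimit.desc D c) := by rw [e1]; infer_instance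
  have e2 : c.ι.app j = colimit.ι D j ≫ colimit.desc D c := by simp
  rw [e2]
  suffices h : Mono (colimit.ι D j) by exact mono_comp _ _
  -- use the under category
  let η : (Functor.const (Under j)).obj (D.obj j) ⟶ (Under.forget j ⋙ D) :=
    { app := fun f => D.map f.hom
      naturality := fun f f' w => by
        dsimp
        rw [Category.id_comp, ← D.map_comp, Under.w w] }
  haveI : ∀ f : Under j, Mono (η.app f) := fun f => hmono f.hom
  haveI : Mono η := NatTrans.mono_of_mono_app η
  haveI : Mono (colim.map η) := (colim (J := Under j) (C := A)).map_mono η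
  have key : colimit.ι D j =
      (constColimIso (Under j) (D.obj j)).inv ≫ colim.map η ≫
        colimit.pre D (Under.forget j) := by
    rw [constColimIso_inv (Under j) (D.obj j) (Under.mk (𝟙 j))]
    rw [colim_map, ι_colimMap_assoc, colimit.ι_pre]
    have he : η.app (Under.mk (𝟙 j)) = 𝟙 (D.obj j) := by
      show D.map (𝟙 j) = _
      simp
    rw [he]
    simp
  rw [key]
  exact mono_comp _ _

/-- Noetherian objects are finitely generated. -/
theorem noetherian_isFG (G : A) [IsNoetherianObject G] : IsFGObj G := by
  intro J _ _ D hmono c hc g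
  haveI hι : ∀ j : J, Mono (c.ι.app j) := fun j => mono_cocone_ι D hmono c hc j
  let β : (Functor.const J).obj G ⟶ (Functor.const J).obj c.pt := (Functor.const J).map g
  let Q := pullback c.ι β
  let τ : Q ⟶ (Functor.const J).obj G := pullback.snd c.ι β
  let σ : Q ⟶ D := pullback.fst c.ι β
  -- each component of τ is a mono
  haveI hτ : ∀ j : J, Mono (τ.app j) := by
    intro j
    haveI : Mono (((evaluation J A).obj j).map c.ι) := hι j
    show Mono (((evaluation J A).obj j).map τ)
    rw [← PreservesPullback.iso_hom_snd ((evaluation J A).obj j) c.ι β]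
    exact mono_comp _ _
  -- the subobjects of G
  let S : J → Subobject G := fun j => Subobject.mk (τ.app j)
  have hS : ∀ {j j' : J} (f : j ⟶ j'), S j ≤ S j' := by
    intro j j' f
    refine Subobject.mk_le_mk_of_comm (Q.map f) ?_
    simpa using τ.naturality f
  -- a maximal subobject
  obtain ⟨s₀, ⟨j₀, rfl⟩, hmax⟩ := (wellFounded_gt (α := Subobject G)).has_min
      (Set.range S) ⟨S (Classical.choice IsFiltered.nonempty), ⟨_, rfl⟩⟩
  have hle : ∀ j : J, S j ≤ S j₀ := by
    intro j
    have h1 : S j ≤ S (IsFiltered.max j j₀) := hS (IsFiltered.leftToMax j j₀)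
    have h2 : S j₀ ≤ S (IsFiltered.max j j₀) := hS (IsFiltered.rightToMax j j₀)
    have h4 : S (IsFiltered.max j j₀) = S j₀ := by
      by_contra hne
      exact hmax _ ⟨_, rfl⟩ (h2.lt_of_ne (Ne.symm hne))
    exact h4 ▸ h1
  -- the factorizations assemble into a natural transformation
  let φ : Q ⟶ (Functor.const J).obj (Q.obj j₀) :=
    { app := fun j => Subobject.ofMkLEMk (τ.app j) (τ.app j₀) (hle j)
      naturality := fun j j' f => by
        rw [← cancel_mono (τ.app j₀)]
        dsimp
        rw [Category.comp_id, Category.assoc, Subobject.ofMkLEMk_comp,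
          Subobject.ofMkLEMk_comp]
        simpa using τ.naturality f }
  have hfac : τ = φ ≫ (Functor.const J).map (τ.app j₀) := by
    ext k
    simp [φ, Subobject.ofMkLEMk_comp]
  -- colim.map c.ι is an iso
  have e1 : colimit.desc D c = (colimit.isoColimitCocone ⟨c, hc⟩).hom := by
    apply colimit.hom_ext; intro k; simp
  haveI hdesc : IsIso (colimit.desc D c) := by rw [e1]; infer_instance
  haveI hiso_α : IsIso (colim.map c.ι) := by
    have h : colim.map c.ι = colimit.desc D c ≫ (constColimIso J c.pt).inv := by
      apply colimit.hom_ext; intro k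
      rw [colim_map, ι_colimMap, colimit.ι_desc_assoc, constColimIso_inv J c.pt k]
    rw [h]; infer_instance
  -- colim.map τ is an iso (AB5: colim preserves pullbacks)
  haveI hiso_τ : IsIso (colim.map τ) := by
    show IsIso ((colim (J := J) (C := A)).map τ)
    rw [← PreservesPullback.iso_hom_snd (colim (J := J) (C := A)) c.ι β]
    infer_instance
  -- naturality of constColimIso
  have hnat : ∀ {X Y : A} (h : X ⟶ Y), colim.map ((Functor.const J).map h)
      = (constColimIso J X).hom ≫ h ≫ (constColimIso J Y).inv := by
    intro X Y h
    apply colimit.hom_ext; intro k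
    rw [colim_map, ι_colimMap]
    have hX : colimit.ι ((Functor.const J).obj X) k ≫ (constColimIso (A := A) J X).hom
        = 𝟙 X := by
      rw [constColimIso]
      exact colimit.isoColimitCocone_ι_hom ⟨myConstCocone J X, myConstIsColimit J X⟩ k
    rw [constColimIso_inv J Y k, ← Category.assoc, hX]
    simp
  -- τ.app j₀ is epi
  haveI hepi : Epi (τ.app j₀) := by
    haveI : Epi (colim.map φ ≫ colim.map ((Functor.const J).map (τ.app j₀))) := by
      rw [← Functor.map_comp, ← hfac]; infer_instance
    haveI h2 : Epi (colim.map ((Functor.const J).map (τ.app j₀))) := epi_of_epi (colim.map φ) _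
    have hconj : τ.app j₀ = (constColimIso J (Q.obj j₀)).inv ≫
        colim.map ((Functor.const J).map (τ.app j₀)) ≫ (constColimIso J G).hom := by
      rw [hnat (τ.app j₀)]
      simp
    rw [hconj]
    exact epi_comp _ _
  haveI : IsIso (τ.app j₀) := isIso_of_mono_of_epi _
  refine ⟨j₀, inv (τ.app j₀) ≫ σ.app j₀, ?_⟩
  have hcond : σ.app j₀ ≫ c.ι.app j₀ = τ.app j₀ ≫ g := by
    have := congrArg (fun t => NatTrans.app t j₀) (pullback.condition (f := c.ι) (g := β))
    exact this
  rw [Category.assoc, hcond, ← Category.assoc, IsIso.inv_hom_id, Category.id_comp]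

/-- Finitely generated objects are stable under quotients. -/
theorem isFG_of_epi {X Q : A} (hX : IsFGObj X) (e : X ⟶ Q) [Epi e] : IsFGObj Q := by
  intro J _ _ D hmono c hc h
  obtain ⟨j, g', hg'⟩ := hX J D hmono c hc (e ≫ h)
  haveI := mono_cocone_ι D hmono c hc j
  have w : kernel.ι e ≫ g' = 0 := by
    rw [← cancel_mono (c.ι.app j)]
    rw [Category.assoc, hg', zero_comp, kernel.condition_assoc, zero_comp]
  refine ⟨j, Abelian.epiDesc e g' w, ?_⟩
  rw [← cancel_epi e, ← Category.assoc, Abelian.comp_epiDesc, hg']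

/-- The zero object is finitely generated. -/
theorem isFG_zero : IsFGObj (0 : A) := by
  intro J _ _ D hmono c hc g
  refine ⟨Classical.choice IsFiltered.nonempty, 0, ?_⟩
  rw [zero_comp]
  exact (Limits.isZero_zero A).eq_of_src 0 g

end Aux

/-- Let `A` be a locally noetherian Grothendieck category and `C` a Serre
subcategory.  Suppose `L ∈ A` satisfies: for every `C`-isomorphism `u' : A' → B'` with
`A'`, `B'` finitely generated, `Hom(u', L)` is an isomorphism.  Then for every
`C`-isomorphism `u : A → B` that is a(n) epimorphism, the induced map
`Hom(B, L) → Hom(A, L)` is an isomorphism. -/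
theorem statement4 {A : Type u} [Category.{v} A] [Abelian A] [HasColimits A]
    [HasFilteredColimits A] [AB5 A] [WellPowered.{v} A]
    (_hln : ∃ G : Set A, ObjectProperty.IsSeparating (· ∈ G) ∧ ∀ X ∈ G, IsNoetherianObject X)
    (C : A → Prop)
    (_hrepl : ∀ {X Y : A}, (X ≅ Y) → C X → C Y)
    (_hsub : ∀ {X Y : A} (f : X ⟶ Y), Mono f → C Y → C X)
    (_hquot : ∀ {X Y : A} (f : X ⟶ Y), Epi f → C X → C Y)
    (_hext : ∀ (S : ShortComplex A), S.ShortExact → C S.X₁ → C S.X₃ → C S.X₂)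
    (L : A)
    (hL : ∀ ⦃A' B' : A⦄ (u' : A' ⟶ B'), IsFGObj A' → IsFGObj B' → IsCIso C u' →
      Function.Bijective (fun g : B' ⟶ L => u' ≫ g))
    {X Y : A} (u : X ⟶ Y) (hu : IsCIso C u) (hepi : Epi u) :
    Function.Bijective (fun g : Y ⟶ L => u ≫ g) := by
  have hC0 : C (0 : A) := by
    haveI : Mono (0 : (0 : A) ⟶ kernel u) :=
      ⟨fun a b _ => (Limits.isZero_zero A).eq_of_tgt a b⟩
    exact _hsub (0 : (0 : A) ⟶ kernel u) inferInstance hu.1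
  have hzero : ∀ (M : A), C M → ∀ (h : M ⟶ L), h = 0 := by
    intro M hM h
    obtain ⟨𝒢, hsep, hnoeth⟩ := _hln
    apply hsep
    intro G hG e
    haveI := hnoeth G hG
    have hfg : IsFGObj (Limits.image e) :=
      isFG_of_epi (noetherian_isFG G) (factorThruImage e)
    have hCim : C (Limits.image e) := _hsub (Limits.image.ι e) inferInstance hM
    have hciso : IsCIso C (0 : Limits.image e ⟶ (0 : A)) := by
      constructor
      · exact _hsub (kernel.ι (0 : Limits.image e ⟶ (0 : A))) inferInstance hCim
      · exact _hquot (cokernel.π (0 : Limits.image e ⟶ (0 : A))) inferInstance hC0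
    have hbij := hL (0 : Limits.image e ⟶ (0 : A)) hfg isFG_zero hciso
    have him : Limits.image.ι e ≫ h = 0 := by
      obtain ⟨g₀, hg₀⟩ := hbij.2 (Limits.image.ι e ≫ h)
      have hg0 : g₀ = 0 := (Limits.isZero_zero A).eq_of_src g₀ 0
      rw [← hg₀, hg0]
      simp
    rw [comp_zero, ← Limits.image.fac e, Category.assoc, him, comp_zero]
  constructor
  · intro g₁ g₂ h
    exact (cancel_epi u).mp h
  · intro f
    have hker : kernel.ι u ≫ f = 0 := hzero _ hu.1 _
    exact ⟨Abelian.epiDesc u f hker, Abelian.comp_epiDesc u f hker⟩
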